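/- The Horn form F = (X₁² + X₂² + X₃² + X₄² + X₅²)² - 4(X₁²X₂² + X₂²X₃² + X₃²X₄² + X₄²X₅² + X₅²X₁²) is nonnegative on ℝ⁵. -/
import Mathlib

lemma horn_key (x1 x2 x3 x4 x5 : ℝ) (h : x1 ^ 2 ≤ x2 ^ 2) :
    0 ≤ (x1 ^ 2 + x2 ^ 2 + x3 ^ 2 + x4 ^ 2 + x5 ^ 2) ^ 2
        - 4 * (x1 ^ 2 * x2 ^ 2 + x2 ^ 2 * x3 ^ 2 + x3 ^ 2 * x4 ^ 2
          + x4 ^ 2 * x5 ^ 2 + x5 ^ 2 * x1 ^ 2) := by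
  nlinarith [sq_nonneg (x1 ^ 2 - x2 ^ 2 + x3 ^ 2 - x4 ^ 2 + x5 ^ 2),
    sq_nonneg (x1 * x4), sq_nonneg x5, mul_nonneg (sub_nonneg.2 h) (sq_nonneg x5)]

theorem horn_nonneg (x1 x2 x3 x4 x5 : ℝ) :
    0 ≤ (x1 ^ 2 + x2 ^ 2 + x3 ^ 2 + x4 ^ 2 + x5 ^ 2) ^ 2
        - 4 * (x1 ^ 2 * x2 ^ 2 + x2 ^ 2 * x3 ^ 2 + x3 ^ 2 * x4 ^ 2
          + x4 ^ 2 * x5 ^ 2 + x5 ^ 2 * x1 ^ 2) := by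
  rcases le_or_gt (x1 ^ 2) (x2 ^ 2) with h | h1
  · exact horn_key x1 x2 x3 x4 x5 h
  rcases le_or_gt (x2 ^ 2) (x3 ^ 2) with h | h2
  · have := horn_key x2 x3 x4 x5 x1 h; linarith
  rcases le_or_gt (x3 ^ 2) (x4 ^ 2) with h | h3
  · have := horn_key x3 x4 x5 x1 x2 h; linarith
  rcases le_or_gt (x4 ^ 2) (x5 ^ 2) with h | h4
  · have := horn_key x4 x5 x1 x2 x3 h; linarith
  rcases le_or_gt (x5 ^ 2) (x1 ^ 2) with h | h5
  · have := horn_key x5 x1 x2 x3 x4 h; linarith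
  linarith
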